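/- arXiv:0806.0311 — 2 statements merged into one kernel-verified Lean document; each statement's English description precedes it below -/
import Mathlib

section
/- Let r > 0 with r < 1/4, and let Y be a finite set of ℓ ≥ 2 points in the unit torus [0,1)² such that, for the leftmost point x₀ of Y and ρ = max_{y ∈ Y} d(x₀, y), one has 0 < ρ < r/2. Let S = { p ∈ [0,1)² : d(p, y) ≤ r for some y ∈ Y } be the set of points within torus distance r of Y. Then the area (Lebesgue measure) of S satisfies π r² (1 + ρ/(6r)) < area(S) < π r² (1 + 5ρ/(2r)). -/
open MeasureTheory Filter Set

noncomputable section

instance fact01 : Fact ((0:ℝ) < 1) := ⟨one_pos⟩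

/-- The unit flat torus `[0,1)²`, modelled as the product of two unit circles `ℝ/ℤ`. -/
abbrev Torus : Type := AddCircle (1:ℝ) × AddCircle (1:ℝ)

/-- Euclidean distance on the flat unit torus. -/
def torusDist (p q : Torus) : ℝ :=
  Real.sqrt (dist p.1 q.1 ^ 2 + dist p.2 q.2 ^ 2)

/-- The lift of a point of `ℝ/ℤ` to its canonical representative in `[0,1)`. -/
def liftIco (x : AddCircle (1:ℝ)) : ℝ := (AddCircle.equivIco 1 0 x : ℝ)

/-- The geometric graph with radius `r` on the points `X 0, …, X (n-1)` of the torus. -/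
def geomGraph (n : ℕ) (r : ℝ) (X : Fin n → Torus) : SimpleGraph (Fin n) where
  Adj i j := i ≠ j ∧ torusDist (X i) (X j) ≤ r
  symm := by
    constructor
    intro i j h
    exact ⟨h.1.symm, by simpa [torusDist, dist_comm, add_comm] using h.2⟩
  loopless := ⟨fun i h => h.1 rfl⟩

/-- The probability of an event for `n` independent uniform random points on the torus. -/
def Pr (n : ℕ) (E : Set (Fin n → Torus)) : ℝ := (volume E).toReal

/-- `μ(n) = n e^{-π r(n)² n}`. -/
def mu (r : ℕ → ℝ) (n : ℕ) : ℝ := n * Real.exp (-Real.pi * r n ^ 2 * n)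

/-- The number of connected components of size exactly `ℓ`. -/
def K (n ℓ : ℕ) (r : ℝ) (X : Fin n → Torus) : ℕ :=
  Set.ncard {c : (geomGraph n r X).ConnectedComponent | c.supp.ncard = ℓ}

/-- `v` is the leftmost vertex of the (small) set `s`: every vertex of `s` lies to the
right of `v`, i.e. at a horizontal displacement in `[0,1/2)` from `v`. -/
def IsLeftmost {m : ℕ} (X : Fin m → Torus) (s : Set (Fin m)) (v : Fin m) : Prop :=
  v ∈ s ∧ ∀ u ∈ s, liftIco ((X u).1 - (X v).1) < 1/2

/-- The number of connected components of size exactly `ℓ` all of whose vertices are at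
torus distance at most `ε r` from the leftmost vertex of the component. -/
def K' (n ℓ : ℕ) (ε r : ℝ) (X : Fin n → Torus) : ℕ :=
  Set.ncard {c : (geomGraph n r X).ConnectedComponent |
    c.supp.ncard = ℓ ∧ ∃ v, IsLeftmost X c.supp v ∧
      ∀ u ∈ c.supp, torusDist (X u) (X v) ≤ ε * r}

/-- A set of vertices is embeddable if some translation of the torus maps all of its points
into the square `[r,1-r]²`. -/
def Embeddable {m : ℕ} (r : ℝ) (X : Fin m → Torus) (s : Set (Fin m)) : Prop :=
  ∃ a b : ℝ, ∀ u ∈ s,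
    liftIco ((X u).1 + (a : AddCircle (1:ℝ))) ∈ Set.Icc r (1 - r) ∧
    liftIco ((X u).2 + (b : AddCircle (1:ℝ))) ∈ Set.Icc r (1 - r)

/-- A non-embeddable component is solitary if no finite nonempty set of additional points of
the torus, each at distance greater than `r` from every vertex of the component, forms a
non-embeddable connected geometric graph with the same radius `r`. -/
def Solitary (n : ℕ) (r : ℝ) (X : Fin n → Torus) (s : Set (Fin n)) : Prop :=
  ¬ Embeddable r X s ∧
  ¬ ∃ (m : ℕ) (Y : Fin m → Torus), 0 < m ∧
      (∀ k : Fin m, ∀ u ∈ s, r < torusDist (Y k) (X u)) ∧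
      (geomGraph m r Y).Connected ∧ ¬ Embeddable r Y Set.univ

/-- The number of non-solitary connected components of size at least `ℓ`. -/
def Ktilde (n ℓ : ℕ) (r : ℝ) (X : Fin n → Torus) : ℕ :=
  Set.ncard {c : (geomGraph n r X).ConnectedComponent |
    ℓ ≤ c.supp.ncard ∧ ¬ Solitary n r X c.supp}

end

/-! ### Auxiliary material for the area bounds -/

noncomputable section AreaAux

open MeasureTheory Filter Set

namespace AreaAux

/-- Triangle inequality for the Euclidean combination of two metrics. -/
lemma sqrt_sq_add_sq_le (a b a' b' : ℝ) :
    Real.sqrt ((a+a')^2 + (b+b')^2) ≤ Real.sqrt (a^2+b^2) + Real.sqrt (a'^2+b'^2) := by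
  set s := Real.sqrt (a^2+b^2) with hs_def
  set t := Real.sqrt (a'^2+b'^2) with ht_def
  have hs : 0 ≤ s := Real.sqrt_nonneg _
  have ht : 0 ≤ t := Real.sqrt_nonneg _
  have hs2 : s^2 = a^2+b^2 := Real.sq_sqrt (by positivity)
  have ht2 : t^2 = a'^2+b'^2 := Real.sq_sqrt (by positivity)
  have key : a*a' + b*b' ≤ s*t := by
    rcases le_or_gt (a*a'+b*b') 0 with h | h
    · exact h.trans (mul_nonneg hs ht)
    · nlinarith [sq_nonneg (a*b' - a'*b), mul_nonneg hs ht]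
  have h2 : (a+a')^2+(b+b')^2 ≤ (s+t)^2 := by nlinarith
  calc Real.sqrt ((a+a')^2+(b+b')^2) ≤ Real.sqrt ((s+t)^2) := Real.sqrt_le_sqrt h2
  _ = s + t := Real.sqrt_sq (by linarith)

lemma torusDist_comm (p q : Torus) : torusDist p q = torusDist q p := by
  simp [torusDist, dist_comm]

lemma torusDist_triangle (p z q : Torus) :
    torusDist p q ≤ torusDist p z + torusDist z q := by
  have h1 : dist p.1 q.1 ≤ dist p.1 z.1 + dist z.1 q.1 := dist_triangle _ _ _
  have h2 : dist p.2 q.2 ≤ dist p.2 z.2 + dist z.2 q.2 := dist_triangle _ _ _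
  refine le_trans (Real.sqrt_le_sqrt ?_) (sqrt_sq_add_sq_le _ _ _ _)
  exact add_le_add (pow_le_pow_left₀ dist_nonneg h1 2) (pow_le_pow_left₀ dist_nonneg h2 2)

lemma norm_coe_le (x : ℝ) : ‖(x : AddCircle (1:ℝ))‖ ≤ |x| := by
  simpa using QuotientAddGroup.norm_mk_le_norm (S := AddSubgroup.zmultiples (1:ℝ)) (m := x)

lemma norm_coe_eq {x : ℝ} (hx : |x| ≤ 1/2) : ‖(x : AddCircle (1:ℝ))‖ = |x| :=
  (AddCircle.norm_coe_eq_abs_iff (p := 1) one_ne_zero).mpr (by simpa using hx)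

lemma coe_inj {x y : ℝ} (h : |x - y| < 1) (hxy : (x : AddCircle (1:ℝ)) = y) : x = y := by
  rw [QuotientAddGroup.eq_iff_sub_mem] at hxy
  obtain ⟨k, hk⟩ := AddSubgroup.mem_zmultiples_iff.mp hxy
  have hk' : (k : ℝ) = x - y := by simpa using hk
  have h1 : |(k:ℝ)| < 1 := by rw [hk']; exact h
  have h2 : k = 0 := Int.abs_lt_one_iff.mp (by exact_mod_cast h1)
  have : x - y = 0 := by rw [← hk', h2]; simp
  linarith

/-- The fundamental square for the torus, with corner `(-1/2, -1/2)`. -/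
def I2 : Set ℝ := Ioc (-(1/2)) (-(1/2)+1)

def Q2 : Set (ℝ×ℝ) := I2 ×ˢ I2

lemma abs_le_half_of_mem_I2 {x : ℝ} (hx : x ∈ I2) : |x| ≤ 1/2 := by
  simp only [I2, mem_Ioc] at hx
  rw [abs_le]; constructor <;> linarith [hx.1, hx.2]

lemma mem_I2_of_abs {x : ℝ} (hx : |x| < 1/2) : x ∈ I2 := by
  rw [abs_lt] at hx
  simp only [I2, mem_Ioc]
  constructor <;> linarith [hx.1, hx.2]

/-- The chart of the torus around a base point `c`. -/
def psi (c : Torus) (v : ℝ × ℝ) : Torus := (c.1 + ↑v.1, c.2 + ↑v.2)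

lemma psi_mp (c : Torus) : MeasurePreserving (psi c) (volume.restrict Q2) volume := by
  haveI : (volume : Measure Torus).IsAddLeftInvariant :=
    Measure.prod.instIsAddLeftInvariant (μ := (volume : Measure (AddCircle (1:ℝ))))
      (ν := (volume : Measure (AddCircle (1:ℝ))))
  have h1 : MeasurePreserving (Prod.map ((↑) : ℝ → AddCircle (1:ℝ)) ((↑) : ℝ → AddCircle (1:ℝ)))
      ((volume.restrict I2).prod (volume.restrict I2))
      ((volume : Measure (AddCircle (1:ℝ))).prod volume) :=
    (AddCircle.measurePreserving_mk 1 (-(1/2))).prod (AddCircle.measurePreserving_mk 1 (-(1/2)))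
  have h2 : MeasurePreserving (fun q : Torus => c + q) volume volume :=
    measurePreserving_add_left volume c
  have h3 : psi c = (fun q : Torus => c + q) ∘
      Prod.map ((↑) : ℝ → AddCircle (1:ℝ)) ((↑) : ℝ → AddCircle (1:ℝ)) := by
    funext v; rfl
  have h5 : (volume : Measure (ℝ×ℝ)).restrict Q2
      = (volume.restrict I2).prod (volume.restrict I2) := by
    rw [Measure.prod_restrict]; rfl
  rw [h3, h5]
  exact h2.comp h1

lemma psi_injOn (c : Torus) : InjOn (psi c) Q2 := by
  rintro ⟨x1,x2⟩ ⟨hx1,hx2⟩ ⟨y1,y2⟩ ⟨hy1,hy2⟩ h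
  simp only [psi, Prod.mk.injEq] at h
  have e1 : (x1 : AddCircle (1:ℝ)) = y1 := add_left_cancel h.1
  have e2 : (x2 : AddCircle (1:ℝ)) = y2 := add_left_cancel h.2
  simp only [I2, mem_Ioc] at hx1 hx2 hy1 hy2
  have : x1 = y1 := coe_inj (by rw [abs_lt]; constructor <;>
    [linarith [hx1.1, hy1.2]; linarith [hx1.2, hy1.1]]) e1
  have : x2 = y2 := coe_inj (by rw [abs_lt]; constructor <;>
    [linarith [hx2.1, hy2.2]; linarith [hx2.2, hy2.1]]) e2
  simp_all

lemma psi_isOpenMap (c : Torus) : IsOpenMap (psi c) := by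
  have h3 : psi c = (fun q : Torus => c + q) ∘
      Prod.map ((↑) : ℝ → AddCircle (1:ℝ)) ((↑) : ℝ → AddCircle (1:ℝ)) := by
    funext v; rfl
  rw [h3]
  exact (Homeomorph.addLeft c).isOpenMap.comp
    (QuotientAddGroup.isOpenMap_coe.prodMap QuotientAddGroup.isOpenMap_coe)

lemma torusDist_psi_le (c : Torus) (v u : ℝ×ℝ) :
    torusDist (psi c v) (psi c u) ≤ Real.sqrt ((v.1-u.1)^2+(v.2-u.2)^2) := by
  have e1 : dist (c.1 + (v.1:AddCircle (1:ℝ))) (c.1 + (u.1:AddCircle (1:ℝ)))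
      = ‖((v.1 - u.1 : ℝ) : AddCircle (1:ℝ))‖ := by
    rw [dist_eq_norm]
    congr 1
    rw [show ((v.1 - u.1 : ℝ) : AddCircle (1:ℝ)) = (v.1 : AddCircle (1:ℝ)) - (u.1 : AddCircle (1:ℝ))
      from map_sub (QuotientAddGroup.mk' (AddSubgroup.zmultiples (1:ℝ))) _ _]
    abel
  have e2 : dist (c.2 + (v.2:AddCircle (1:ℝ))) (c.2 + (u.2:AddCircle (1:ℝ)))
      = ‖((v.2 - u.2 : ℝ) : AddCircle (1:ℝ))‖ := by
    rw [dist_eq_norm]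
    congr 1
    rw [show ((v.2 - u.2 : ℝ) : AddCircle (1:ℝ)) = (v.2 : AddCircle (1:ℝ)) - (u.2 : AddCircle (1:ℝ))
      from map_sub (QuotientAddGroup.mk' (AddSubgroup.zmultiples (1:ℝ))) _ _]
    abel
  unfold torusDist psi
  simp only [e1, e2]
  apply Real.sqrt_le_sqrt
  have n1 := norm_coe_le (v.1 - u.1)
  have n2 := norm_coe_le (v.2 - u.2)
  have : |v.1 - u.1|^2 = (v.1-u.1)^2 := sq_abs _
  have : |v.2 - u.2|^2 = (v.2-u.2)^2 := sq_abs _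
  calc ‖((v.1 - u.1 : ℝ) : AddCircle (1:ℝ))‖^2 + ‖((v.2 - u.2 : ℝ) : AddCircle (1:ℝ))‖^2
      ≤ |v.1 - u.1|^2 + |v.2 - u.2|^2 :=
        add_le_add (pow_le_pow_left₀ (norm_nonneg _) n1 2)
          (pow_le_pow_left₀ (norm_nonneg _) n2 2)
  _ = (v.1-u.1)^2 + (v.2-u.2)^2 := by rw [sq_abs, sq_abs]

lemma psi_zero (c : Torus) : psi c (0,0) = c := by
  simp [psi]

lemma torusDist_psi_center (c : Torus) {v : ℝ×ℝ} (h1 : |v.1| ≤ 1/2) (h2 : |v.2| ≤ 1/2) :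
    torusDist (psi c v) c = Real.sqrt (v.1^2+v.2^2) := by
  unfold torusDist psi
  have e1 : dist (c.1 + (v.1:AddCircle (1:ℝ))) c.1 = ‖((v.1:ℝ) : AddCircle (1:ℝ))‖ := by
    rw [dist_eq_norm]; congr 1; abel
  have e2 : dist (c.2 + (v.2:AddCircle (1:ℝ))) c.2 = ‖((v.2:ℝ) : AddCircle (1:ℝ))‖ := by
    rw [dist_eq_norm]; congr 1; abel
  simp only [e1, e2, norm_coe_eq h1, norm_coe_eq h2, sq_abs]

end AreaAux

end AreaAux

noncomputable section AreaAux2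
open MeasureTheory Filter Set
namespace AreaAux

lemma continuous_w (t : ℝ) : Continuous (fun x : ℝ => Real.sqrt (t^2 - x^2)) :=
  Real.continuous_sqrt.comp (continuous_const.sub (continuous_pow 2))

lemma integrableOn_w (t b1 b2 : ℝ) :
    IntegrableOn (fun x : ℝ => Real.sqrt (t^2 - x^2)) (Ioo b1 b2) := by
  exact ((continuous_w t).integrableOn_Icc).mono_set Ioo_subset_Icc_self

/-- The half-disk integral. -/
lemma integral_twosqrt (t : ℝ) (ht : 0 < t) :
    ∫ x in Ioo (-t) t, 2 * Real.sqrt (t^2 - x^2) = Real.pi * t^2 := by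
  rw [← integral_Ioc_eq_integral_Ioo,
    ← intervalIntegral.integral_of_le (by linarith : -t ≤ t)]
  have key := intervalIntegral.integral_comp_mul_left
    (fun y : ℝ => 2 * Real.sqrt (t^2 - y^2)) (ne_of_gt ht) (a := -1) (b := 1)
  have e1 : ∀ x : ℝ, (fun y : ℝ => 2 * Real.sqrt (t^2 - y^2)) (t * x)
      = (2*t) * Real.sqrt (1 - x^2) := by
    intro x
    have : t^2 - (t*x)^2 = t^2 * (1 - x^2) := by ring
    simp only [this, Real.sqrt_mul (sq_nonneg t), Real.sqrt_sq ht.le]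
    ring
  simp only [e1] at key
  rw [intervalIntegral.integral_const_mul, integral_sqrt_one_sub_sq] at key
  have e2 : t * (-1) = -t := by ring
  have e3 : t * 1 = t := by ring
  rw [e2, e3] at key
  have := congrArg (fun z => t * z) key
  simp only [smul_eq_mul, ← mul_assoc, mul_inv_cancel₀ (ne_of_gt ht), one_mul] at this
  rw [← this]; ring

lemma vol_disk_region (t ε : ℝ) (ht : 0 < t) (hε : 0 ≤ ε) :
    (volume : Measure (ℝ×ℝ)) (regionBetween (fun x => -(Real.sqrt (t^2-x^2)+ε))
      (fun x => Real.sqrt (t^2-x^2)+ε) (Ioo (-t) t))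
      = ENNReal.ofReal (Real.pi*t^2 + 4*ε*t) := by
  have hint : IntegrableOn (fun x : ℝ => Real.sqrt (t^2-x^2)+ε) (Ioo (-t) t) :=
    (integrableOn_w t _ _).add (integrableOn_const measure_Ioo_lt_top.ne)
  have hint2 : IntegrableOn (fun x : ℝ => -(Real.sqrt (t^2-x^2)+ε)) (Ioo (-t) t) := hint.neg
  rw [Measure.volume_eq_prod, volume_regionBetween_eq_integral hint2 hint measurableSet_Ioo
    (fun x _ => neg_le_self (by positivity))]
  congr 1
  have e : EqOn (fun y => (fun x => Real.sqrt (t^2-x^2)+ε) y - (fun x => -(Real.sqrt (t^2-x^2)+ε)) y)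
      (fun y : ℝ => 2 * Real.sqrt (t^2-y^2) + 2*ε) (Ioo (-t) t) := by
    intro y _; simp; ring
  rw [show (fun x => Real.sqrt (t^2-x^2)+ε) - (fun x => -(Real.sqrt (t^2-x^2)+ε))
      = fun y => (fun x => Real.sqrt (t^2-x^2)+ε) y - (fun x => -(Real.sqrt (t^2-x^2)+ε)) y from rfl,
    setIntegral_congr_fun measurableSet_Ioo e,
    integral_add ((integrableOn_w t (-t) t).const_mul 2)
      (integrableOn_const measure_Ioo_lt_top.ne),
    integral_twosqrt t ht, setIntegral_const, Real.volume_real_Ioo]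
  rw [max_eq_left (by linarith), smul_eq_mul]
  ring_nf

end AreaAux
end AreaAux2

noncomputable section AreaAux3
open MeasureTheory Filter Set
namespace AreaAux

lemma vol_strip (b ρ : ℝ) (hb : 0 < b) (hρ : 0 < ρ) (w : ℝ → ℝ) (hw : Continuous w) :
    (volume : Measure (ℝ×ℝ)) (regionBetween w (fun x => w x + ρ) (Ioo (-b) b))
      = ENNReal.ofReal (2*b*ρ) := by
  have hint : IntegrableOn w (Ioo (-b) b) :=
    (hw.integrableOn_Icc).mono_set Ioo_subset_Icc_self
  have hint2 : IntegrableOn (fun x => w x + ρ) (Ioo (-b) b) :=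
    hint.add (integrableOn_const measure_Ioo_lt_top.ne)
  rw [Measure.volume_eq_prod, volume_regionBetween_eq_integral hint hint2 measurableSet_Ioo
    (fun x _ => by linarith)]
  congr 1
  have e : EqOn (fun y => (fun x => w x + ρ) y - w y) (fun _ : ℝ => ρ) (Ioo (-b) b) := by
    intro y _; simp
  rw [show (fun x => w x + ρ) - w = fun y => (fun x => w x + ρ) y - w y from rfl,
    setIntegral_congr_fun measurableSet_Ioo e, setIntegral_const, Real.volume_real_Ioo,
    max_eq_left (by linarith), smul_eq_mul]
  ring

/-- Rotation-type linear map on `ℝ × ℝ`. -/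
def rot (a b : ℝ) : (ℝ×ℝ) →ₗ[ℝ] (ℝ×ℝ) where
  toFun v := (a*v.1 - b*v.2, b*v.1 + a*v.2)
  map_add' v w := by simp only [Prod.fst_add, Prod.snd_add, Prod.mk_add_mk, Prod.mk.injEq]; constructor <;> ring
  map_smul' c v := by simp only [Prod.smul_fst, Prod.smul_snd, RingHom.id_apply, Prod.smul_mk,
    smul_eq_mul, Prod.mk.injEq]; constructor <;> ring

lemma rot_apply (a b : ℝ) (v : ℝ×ℝ) : rot a b v = (a*v.1 - b*v.2, b*v.1 + a*v.2) := rfl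

lemma rot_norm (a b : ℝ) (v : ℝ×ℝ) :
    (rot a b v).1^2 + (rot a b v).2^2 = (a^2+b^2) * (v.1^2+v.2^2) := by
  rw [rot_apply]; ring

lemma rot_det (a b : ℝ) : LinearMap.det (rot a b) = a^2 + b^2 := by
  have hm : LinearMap.toMatrix (Module.Basis.finTwoProd ℝ) (Module.Basis.finTwoProd ℝ) (rot a b)
      = !![a, -b; b, a] := by
    ext i j
    fin_cases i <;> fin_cases j <;>
      simp [LinearMap.toMatrix_apply, Module.Basis.finTwoProd_zero, Module.Basis.finTwoProd_one,
        Module.Basis.coe_finTwoProd_repr, rot_apply]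
  rw [← LinearMap.det_toMatrix (Module.Basis.finTwoProd ℝ), hm, Matrix.det_fin_two_of]
  ring

lemma rot_rot (a b : ℝ) (h : a^2 + b^2 = 1) (v : ℝ×ℝ) : rot a (-b) (rot a b v) = v := by
  simp only [rot_apply]
  ext
  · show a * (a*v.1 - b*v.2) - (-b) * (b*v.1 + a*v.2) = v.1
    linear_combination v.1 * h
  · show (-b) * (a*v.1 - b*v.2) + a * (b*v.1 + a*v.2) = v.2
    linear_combination v.2 * h

lemma vol_rot_image (a b : ℝ) (h : a^2+b^2 = 1) (s : Set (ℝ×ℝ)) :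
    (volume : Measure (ℝ×ℝ)) (rot a b '' s) = volume s := by
  haveI : (volume : Measure (ℝ×ℝ)).IsAddHaarMeasure :=
    Measure.prod.instIsAddHaarMeasure _ _
  rw [Measure.addHaar_image_linearMap, rot_det, h]
  simp

end AreaAux
end AreaAux3

noncomputable section AreaAux4
open MeasureTheory Filter Set
namespace AreaAux

lemma torusDist_continuous (c : Torus) : Continuous (fun p : Torus => torusDist p c) := by
  unfold torusDist
  exact Real.continuous_sqrt.comp
    (((continuous_fst.dist continuous_const).pow 2).add
      ((continuous_snd.dist continuous_const).pow 2))

lemma pair_vol_zero (x y : ℝ×ℝ) : (volume : Measure (ℝ×ℝ)) {x, y} = 0 := by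
  haveI : NullSingletonClass (volume : Measure (ℝ×ℝ)) :=
    by infer_instance
  exact Set.Countable.measure_zero (by simp) _

lemma vol_ball_le (c : Torus) (t ε : ℝ) (ht : 0 < t) (ht2 : t ≤ 1/2) (hε : 0 < ε) :
    volume {p : Torus | torusDist p c ≤ t} ≤ ENNReal.ofReal (Real.pi * t^2 + 4*ε*t) := by
  set B := {p : Torus | torusDist p c ≤ t} with hB
  have hBmeas : MeasurableSet B :=
    (IsClosed.preimage (torusDist_continuous c) isClosed_Iic).measurableSet
  have hpre := (psi_mp c).measure_preimage hBmeas.nullMeasurableSet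
  rw [Measure.restrict_apply ((psi_mp c).measurable hBmeas)] at hpre
  rw [← hpre]
  have hsub : psi c ⁻¹' B ∩ Q2 ⊆
      regionBetween (fun x => -(Real.sqrt (t^2-x^2)+ε)) (fun x => Real.sqrt (t^2-x^2)+ε)
        (Ioo (-t) t) ∪ ({((t:ℝ),(0:ℝ)), ((-t:ℝ),(0:ℝ))} : Set (ℝ×ℝ)) := by
    rintro v ⟨hvB, hvQ⟩
    have hv1 : |v.1| ≤ 1/2 := abs_le_half_of_mem_I2 hvQ.1
    have hv2 : |v.2| ≤ 1/2 := abs_le_half_of_mem_I2 hvQ.2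
    have hd : Real.sqrt (v.1^2+v.2^2) ≤ t := by
      rw [← torusDist_psi_center c hv1 hv2]; exact hvB
    have hsum : v.1^2 + v.2^2 ≤ t^2 := by
      have e : v.1^2+v.2^2 = (Real.sqrt (v.1^2+v.2^2))^2 := (Real.sq_sqrt (by positivity)).symm
      rw [e]; exact pow_le_pow_left₀ (Real.sqrt_nonneg _) hd 2
    by_cases h1 : |v.1| < t
    · left
      refine ⟨abs_lt.mp h1, ?_, ?_⟩
      · have h2 : v.2^2 ≤ t^2 - v.1^2 := by linarith
        have h3 : |v.2| ≤ Real.sqrt (t^2 - v.1^2) := by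
          rw [← Real.sqrt_sq_eq_abs]; exact Real.sqrt_le_sqrt h2
        have := (abs_le.mp h3).1
        simp only []; linarith
      · have h2 : v.2^2 ≤ t^2 - v.1^2 := by linarith
        have h3 : |v.2| ≤ Real.sqrt (t^2 - v.1^2) := by
          rw [← Real.sqrt_sq_eq_abs]; exact Real.sqrt_le_sqrt h2
        have := (abs_le.mp h3).2
        simp only []; linarith
    · right
      push_neg at h1
      have h2 : |v.1| ≤ t := by
        rw [← Real.sqrt_sq_eq_abs, ← Real.sqrt_sq ht.le]
        exact Real.sqrt_le_sqrt (by nlinarith [sq_nonneg v.2])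
      have h3 : |v.1| = t := le_antisymm h2 h1
      have h4 : v.1^2 = t^2 := by rw [← sq_abs, h3]
      have h5 : v.2 = 0 := by nlinarith [sq_nonneg v.2]
      rcases abs_eq ht.le |>.mp h3 with h6 | h6
      · left; ext <;> simp [h6, h5]
      · right; ext <;> simp [h6, h5]
  calc volume (psi c ⁻¹' B ∩ Q2) ≤ _ := measure_mono hsub
  _ ≤ _ + _ := measure_union_le _ _
  _ = ENNReal.ofReal (Real.pi*t^2 + 4*ε*t) := by
      rw [vol_disk_region t ε ht hε.le, pair_vol_zero, add_zero]

end AreaAux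
end AreaAux4

noncomputable section AreaAux5
open MeasureTheory Filter Set
namespace AreaAux


lemma abs_coord_lt_half {x : ℝ×ℝ} (h : x.1^2+x.2^2 < 1/4) : |x.1| < 1/2 ∧ |x.2| < 1/2 := by
  constructor
  · rw [← Real.sqrt_sq_eq_abs,
      show (1/2 : ℝ) = Real.sqrt ((1/2)^2) from (Real.sqrt_sq (by norm_num)).symm]
    exact Real.sqrt_lt_sqrt (sq_nonneg _) (by nlinarith [sq_nonneg x.2])
  · rw [← Real.sqrt_sq_eq_abs,
      show (1/2 : ℝ) = Real.sqrt ((1/2)^2) from (Real.sqrt_sq (by norm_num)).symm]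
    exact Real.sqrt_lt_sqrt (sq_nonneg _) (by nlinarith [sq_nonneg x.1])

lemma vol_psi_image (c : Torus) {E : Set (ℝ×ℝ)} (hE : E ⊆ Q2) (hEopen : IsOpen (psi c '' E)) :
    volume (psi c '' E) = volume E := by
  have hmeas := hEopen.measurableSet
  have hpre := (psi_mp c).measure_preimage hmeas.nullMeasurableSet
  rw [Measure.restrict_apply ((psi_mp c).measurable hmeas)] at hpre
  have he : psi c ⁻¹' (psi c '' E) ∩ Q2 = E := by
    ext v; constructor
    · rintro ⟨⟨v', hv', he⟩, hvQ⟩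
      rwa [← psi_injOn c (hE hv') hvQ he]
    · intro hv; exact ⟨⟨v, hv, rfl⟩, hE hv⟩
  rw [← hpre, he]

set_option maxHeartbeats 4000000 in
lemma vol_lower (c y : Torus) (r ρ : ℝ) (hr0 : 0 < r) (hr : r < 1/4)
    (hρ0 : 0 < ρ) (hρr : ρ < r/2) (hd : torusDist c y = ρ) :
    ENNReal.ofReal (Real.pi * r^2 + Real.sqrt 3 * r * ρ)
      ≤ volume {p : Torus | torusDist p c ≤ r ∨ torusDist p y ≤ r} := by
  set S' := {p : Torus | torusDist p c ≤ r ∨ torusDist p y ≤ r} with hS'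
  -- the lifted coordinates of `y` relative to `c`
  set u : ℝ×ℝ := ((AddCircle.equivIoc 1 (-(1/2)) (y.1 - c.1) : ℝ),
                  (AddCircle.equivIoc 1 (-(1/2)) (y.2 - c.2) : ℝ)) with hu
  have hcoe1 : ((u.1 : ℝ) : AddCircle (1:ℝ)) = y.1 - c.1 :=
    (AddCircle.equivIoc 1 (-(1/2))).symm_apply_apply (y.1 - c.1)
  have hcoe2 : ((u.2 : ℝ) : AddCircle (1:ℝ)) = y.2 - c.2 :=
    (AddCircle.equivIoc 1 (-(1/2))).symm_apply_apply (y.2 - c.2)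
  have hpsiu : psi c u = y := by
    unfold psi
    rw [hcoe1, hcoe2]
    ext <;> simp
  have humem1 : u.1 ∈ I2 := (AddCircle.equivIoc 1 (-(1/2)) (y.1 - c.1)).2
  have humem2 : u.2 ∈ I2 := (AddCircle.equivIoc 1 (-(1/2)) (y.2 - c.2)).2
  have hu1 : |u.1| ≤ 1/2 := abs_le_half_of_mem_I2 humem1
  have hu2 : |u.2| ≤ 1/2 := abs_le_half_of_mem_I2 humem2
  have hnorm : u.1^2 + u.2^2 = ρ^2 := by
    have e1 : torusDist (psi c u) c = Real.sqrt (u.1^2+u.2^2) := torusDist_psi_center c hu1 hu2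
    rw [hpsiu, ← torusDist_comm c y, hd] at e1
    have := congrArg (fun z : ℝ => z^2) e1
    simpa [Real.sq_sqrt (by positivity : (0:ℝ) ≤ u.1^2+u.2^2)] using this.symm
  -- rotation sending (0, ρ) to u
  set a : ℝ := u.2/ρ with ha
  set b : ℝ := -(u.1/ρ) with hb
  have hab : a^2 + b^2 = 1 := by
    have : a^2+b^2 = (u.1^2+u.2^2)/ρ^2 := by rw [ha, hb]; field_simp; ring
    rw [this, hnorm]; field_simp
  have hrotu : rot a b (0, ρ) = u := by
    rw [rot_apply]
    have : -(b*ρ) = u.1 := by rw [hb]; field_simp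
    have h2 : a*ρ = u.2 := by rw [ha]; field_simp
    ext <;> simp only []
    · rw [mul_zero, zero_sub, this]
    · rw [mul_zero, zero_add, h2]
  clear hu ha hb
  clear_value u a b
  -- geometry of the strip region
  set b2 : ℝ := Real.sqrt 3 / 2 * r with hb2
  have hb20 : 0 < b2 := by
    have : (0:ℝ) < Real.sqrt 3 := Real.sqrt_pos.mpr (by norm_num)
    positivity
  have hb2sq : b2^2 = 3/4 * r^2 := by
    rw [hb2, mul_pow, div_pow, Real.sq_sqrt (by norm_num : (0:ℝ) ≤ 3)]; ring
  set w : ℝ → ℝ := fun x => Real.sqrt (r^2 - x^2) with hw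
  set L : Set (ℝ×ℝ) := regionBetween w (fun x => w x + ρ) (Ioo (-b2) b2) with hL
  -- facts about members of L
  have hLfacts : ∀ v ∈ L, v.1^2+v.2^2 > r^2 ∧ v.1^2+(v.2-ρ)^2 < r^2 ∧ v.1^2+v.2^2 < 4*r^2 := by
    rintro v ⟨hv1, hv2⟩
    rw [mem_Ioo] at hv1 hv2
    have hv21 : w v.1 < v.2 := hv2.1
    have hv22 : v.2 < w v.1 + ρ := hv2.2
    have habs1 : |v.1| < b2 := abs_lt.mpr hv1
    have hsq1 : v.1^2 ≤ b2^2 := by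
      rw [← sq_abs]; exact pow_le_pow_left₀ (abs_nonneg _) habs1.le 2
    have hpos : (0:ℝ) ≤ r^2 - v.1^2 := by nlinarith
    have hwsq : (w v.1)^2 = r^2 - v.1^2 := Real.sq_sqrt hpos
    have hwnn : 0 ≤ w v.1 := Real.sqrt_nonneg _
    have hwge : r/2 ≤ w v.1 := by
      rw [hw]
      have : (r/2) = Real.sqrt ((r/2)^2) := (Real.sqrt_sq (by linarith)).symm
      rw [this]
      exact Real.sqrt_le_sqrt (by nlinarith)
    have hwle : w v.1 ≤ r := by
      rw [hw]
      have : r = Real.sqrt (r^2) := (Real.sqrt_sq hr0.le).symm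
      nth_rewrite 2 [this]
      exact Real.sqrt_le_sqrt (by nlinarith)
    refine ⟨?_, ?_, ?_⟩
    · have : (w v.1)^2 < v.2^2 := by
        apply pow_lt_pow_left₀ hv21 hwnn
        · norm_num
      nlinarith
    · have h1 : v.2 - ρ < w v.1 := by linarith [hv22]
      have h2 : -(w v.1) < v.2 - ρ := by linarith [hv21, hwge]
      have := sq_lt_sq' h2 h1
      nlinarith
    · have h1 : 0 ≤ v.2 := le_trans hwnn hv21.le
      have h2 : v.2 < 3/2 * r := by linarith [hv22, hwle]
      nlinarith
  -- the two model sets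
  set D : Set (ℝ×ℝ) := {v : ℝ×ℝ | v.1^2+v.2^2 < r^2} with hD
  have hDopen : IsOpen D := isOpen_lt (by fun_prop) continuous_const
  have hDsubQ : D ⊆ Q2 := by
    rintro v hv
    simp only [hD, mem_setOf_eq] at hv
    have h1 : |v.1| < 1/2 := by
      rw [← Real.sqrt_sq_eq_abs]
      calc Real.sqrt (v.1^2) ≤ Real.sqrt (v.1^2+v.2^2) := Real.sqrt_le_sqrt (by nlinarith [sq_nonneg v.2])
      _ < 1/2 := by
          rw [show (1/2 : ℝ) = Real.sqrt ((1/2)^2) from (Real.sqrt_sq (by norm_num)).symm]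
          exact Real.sqrt_lt_sqrt (by positivity) (by nlinarith)
    have h2 : |v.2| < 1/2 := by
      rw [← Real.sqrt_sq_eq_abs]
      calc Real.sqrt (v.2^2) ≤ Real.sqrt (v.1^2+v.2^2) := Real.sqrt_le_sqrt (by nlinarith [sq_nonneg v.1])
      _ < 1/2 := by
          rw [show (1/2 : ℝ) = Real.sqrt ((1/2)^2) from (Real.sqrt_sq (by norm_num)).symm]
          exact Real.sqrt_lt_sqrt (by positivity) (by nlinarith)
    exact ⟨mem_I2_of_abs h1, mem_I2_of_abs h2⟩
  set RL : Set (ℝ×ℝ) := rot a b '' L with hRL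
  have hRLnorm : ∀ x ∈ RL, r^2 < x.1^2+x.2^2 ∧ x.1^2+x.2^2 < 4*r^2
      ∧ (x.1-u.1)^2 + (x.2-u.2)^2 < r^2 := by
    rintro x ⟨v, hv, rfl⟩
    obtain ⟨p1, p2, p3⟩ := hLfacts v hv
    have e1 : (rot a b v).1^2 + (rot a b v).2^2 = v.1^2+v.2^2 := by
      rw [rot_norm, hab, one_mul]
    have e2 : ((rot a b v).1-u.1)^2 + ((rot a b v).2-u.2)^2 = v.1^2+(v.2-ρ)^2 := by
      have : ((rot a b v).1-u.1, (rot a b v).2-u.2) = rot a b (v - (0,ρ)) := by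
        rw [map_sub, hrotu]; rfl
      have e3 := rot_norm a b (v - (0,ρ))
      rw [hab, one_mul] at e3
      calc ((rot a b v).1-u.1)^2 + ((rot a b v).2-u.2)^2
          = (rot a b (v - (0,ρ))).1^2 + (rot a b (v - (0,ρ))).2^2 := by rw [← this]
      _ = (v - (0,ρ)).1^2 + (v - (0,ρ)).2^2 := e3
      _ = v.1^2+(v.2-ρ)^2 := by simp only [Prod.fst_sub, Prod.snd_sub]; norm_num
    exact ⟨by rw [e1]; exact p1, by rw [e1]; exact p3, by rw [e2]; exact p2⟩
  have hDsubQ' : D ⊆ Q2 := hDsubQ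
  have hRLsubQ : RL ⊆ Q2 := by
    rintro x hx
    obtain ⟨-, h4, -⟩ := hRLnorm x hx
    obtain ⟨h1, h2⟩ := abs_coord_lt_half (x := x) (by nlinarith)
    exact ⟨mem_I2_of_abs h1, mem_I2_of_abs h2⟩
  -- openness
  have hLopen : IsOpen L := by
    have hrep : L = (Prod.fst ⁻¹' (Ioo (-b2) b2)) ∩
        ({p : ℝ×ℝ | w p.1 < p.2} ∩ {p : ℝ×ℝ | p.2 < w p.1 + ρ}) := by
      ext p
      simp only [hL, regionBetween, mem_setOf_eq, mem_inter_iff, mem_preimage, mem_Ioo]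
      try tauto
    rw [hrep]
    have hwc : Continuous w := continuous_w r
    exact (isOpen_Ioo.preimage continuous_fst).inter
      ((isOpen_lt (hwc.comp continuous_fst) continuous_snd).inter
        (isOpen_lt continuous_snd ((hwc.comp continuous_fst).add continuous_const)))
  have hab' : a^2 + (-b)^2 = 1 := by rw [show (-b)^2 = b^2 by ring]; exact hab
  have hRLopen : IsOpen RL := by
    have himg : RL = rot a (-b) ⁻¹' L := by
      ext x; constructor
      · rintro ⟨v, hv, rfl⟩
        simpa [mem_preimage, rot_rot a b hab v] using hv
      · intro hx
        exact ⟨rot a (-b) x, hx, by have := rot_rot a (-b) hab' x; rwa [neg_neg] at this⟩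
    rw [himg]
    exact hLopen.preimage (LinearMap.continuous_of_finiteDimensional _)
  -- the two pieces on the torus
  set A1 : Set Torus := psi c '' D with hA1
  set A2 : Set Torus := psi c '' RL with hA2
  have hA1open : IsOpen A1 := psi_isOpenMap c D hDopen
  have hA2open : IsOpen A2 := psi_isOpenMap c RL hRLopen
  have hvolA1 : ENNReal.ofReal (Real.pi * r^2) ≤ volume A1 := by
    rw [vol_psi_image c hDsubQ hA1open]
    have hsub : regionBetween (fun x => -(Real.sqrt (r^2-x^2)+0))
        (fun x => Real.sqrt (r^2-x^2)+0) (Ioo (-r) r) ⊆ D := by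
      rintro p ⟨hp1, hp2⟩
      rw [mem_Ioo] at hp1 hp2
      have hp21 : -(Real.sqrt (r^2-p.1^2)+0) < p.2 := hp2.1
      have hp22 : p.2 < Real.sqrt (r^2-p.1^2)+0 := hp2.2
      rw [add_zero] at hp21 hp22
      have habs : |p.1| < r := abs_lt.mpr hp1
      have hnn : (0:ℝ) ≤ r^2 - p.1^2 := by nlinarith [sq_abs p.1, abs_nonneg p.1, mul_nonneg (sub_nonneg.mpr habs.le) (by positivity : (0:ℝ) ≤ r + |p.1|)]
      have hwsq : (Real.sqrt (r^2-p.1^2))^2 = r^2 - p.1^2 := Real.sq_sqrt hnn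
      have := sq_lt_sq' hp21 hp22
      simp only [hD, mem_setOf_eq]
      nlinarith
    calc ENNReal.ofReal (Real.pi * r^2)
        = volume (regionBetween (fun x => -(Real.sqrt (r^2-x^2)+0))
            (fun x => Real.sqrt (r^2-x^2)+0) (Ioo (-r) r)) := by
          rw [vol_disk_region r 0 hr0 le_rfl]; norm_num
    _ ≤ volume D := measure_mono hsub
  have hvolA2 : volume A2 = ENNReal.ofReal (Real.sqrt 3 * r * ρ) := by
    rw [vol_psi_image c hRLsubQ hA2open, hRL, vol_rot_image a b hab,
      hL, vol_strip b2 ρ hb20 hρ0 w (continuous_w r), hb2]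
    congr 1
    ring
  -- inclusion in S'
  have hA1S : A1 ⊆ S' := by
    rintro p ⟨v, hv, rfl⟩
    left
    have h0 := torusDist_psi_le c v (0,0)
    rw [psi_zero] at h0
    simp only [hD, mem_setOf_eq] at hv
    calc torusDist (psi c v) c ≤ Real.sqrt ((v.1-(0,(0:ℝ)).1)^2+(v.2-(0,(0:ℝ)).2)^2) := h0
    _ = Real.sqrt (v.1^2+v.2^2) := by norm_num
    _ ≤ Real.sqrt (r^2) := Real.sqrt_le_sqrt hv.le
    _ = r := Real.sqrt_sq hr0.le
  have hA2S : A2 ⊆ S' \ A1 := by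
    rintro p ⟨x, hx, rfl⟩
    obtain ⟨hg, -, hu'⟩ := hRLnorm x hx
    constructor
    · right
      have h0 := torusDist_psi_le c x u
      rw [hpsiu] at h0
      calc torusDist (psi c x) y ≤ Real.sqrt ((x.1-u.1)^2+(x.2-u.2)^2) := h0
      _ ≤ Real.sqrt (r^2) := Real.sqrt_le_sqrt hu'.le
      _ = r := Real.sqrt_sq hr0.le
    · rintro ⟨v, hv, he⟩
      have := psi_injOn c (hDsubQ hv) (hRLsubQ hx) he
      simp only [hD, mem_setOf_eq] at hv
      rw [this] at hv
      linarith
  -- put everything together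
  have key : volume (S' ∩ A1) + volume (S' \ A1) = volume S' :=
    measure_inter_add_diff S' hA1open.measurableSet
  have e1 : volume A1 ≤ volume (S' ∩ A1) := measure_mono (subset_inter hA1S subset_rfl)
  have e2 : volume A2 ≤ volume (S' \ A1) := measure_mono hA2S
  calc ENNReal.ofReal (Real.pi * r^2 + Real.sqrt 3 * r * ρ)
      = ENNReal.ofReal (Real.pi * r^2) + ENNReal.ofReal (Real.sqrt 3 * r * ρ) :=
        ENNReal.ofReal_add (by positivity) (by positivity)
  _ ≤ volume A1 + volume A2 := add_le_add hvolA1 hvolA2.ge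
  _ ≤ volume (S' ∩ A1) + volume (S' \ A1) := add_le_add e1 e2
  _ = volume S' := key

end AreaAux
end AreaAux5

/-- Area bounds for the `r`-neighbourhood of a small point set on the
torus: if all `ℓ ≥ 2` points of `Y` lie to the right of the leftmost point `x₀`, and
`ρ = max_{y ∈ Y} d(x₀,y)` satisfies `0 < ρ < r/2` with `r < 1/4`, then
`π r²(1 + ρ/(6r)) < area(S) < π r²(1 + 5ρ/(2r))` where `S` is the set of points at
distance at most `r` from `Y`. -/
theorem area_neighbourhood_bounds
    (r : ℝ) (hr0 : 0 < r) (hr : r < 1/4)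
    (ℓ : ℕ) (hℓ : 2 ≤ ℓ) (Y : Finset Torus) (hY : Y.card = ℓ)
    (x₀ : Torus) (hx₀ : x₀ ∈ Y)
    (hleft : ∀ y ∈ Y, liftIco (y.1 - x₀.1) < 1/2)
    (ρ : ℝ) (hρ : IsGreatest ((fun y => torusDist x₀ y) '' ↑Y) ρ)
    (hρ0 : 0 < ρ) (hρr : ρ < r / 2) :
    Real.pi * r ^ 2 * (1 + ρ / (6 * r)) <
        (volume {p : Torus | ∃ y ∈ Y, torusDist p y ≤ r}).toReal ∧
      (volume {p : Torus | ∃ y ∈ Y, torusDist p y ≤ r}).toReal <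
        Real.pi * r ^ 2 * (1 + 5 * ρ / (2 * r)) := by
  classical
  obtain ⟨hmem, hub⟩ := hρ
  obtain ⟨ystar, hyY, hyd⟩ := hmem
  rw [Finset.mem_coe] at hyY
  set S := {p : Torus | ∃ y ∈ Y, torusDist p y ≤ r} with hS
  have hSfin : volume S ≠ ⊤ := by
    have h1 : volume S ≤ volume (univ : Set Torus) := measure_mono (subset_univ _)
    have h2 : volume (univ : Set Torus) = 1 := by
      rw [Measure.volume_eq_prod, ← univ_prod_univ, Measure.prod_prod, AddCircle.measure_univ]
      simp
    exact ne_top_of_le_ne_top (by rw [h2]; exact ENNReal.one_ne_top) h1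
  constructor
  · -- lower bound
    have hsub : {p : Torus | torusDist p x₀ ≤ r ∨ torusDist p ystar ≤ r} ⊆ S := by
      rintro p (hp | hp)
      exacts [⟨x₀, hx₀, hp⟩, ⟨ystar, hyY, hp⟩]
    have hlow := (AreaAux.vol_lower x₀ ystar r ρ hr0 hr hρ0 hρr hyd).trans
      ((measure_mono hsub : _ ≤ volume S))
    have h3 : Real.pi * r^2 + Real.sqrt 3 * r * ρ ≤ (volume S).toReal := by
      have := ENNReal.toReal_mono hSfin hlow
      rwa [ENNReal.toReal_ofReal (by positivity)] at this
    have hsqrt3 : (1.7:ℝ) ≤ Real.sqrt 3 := by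
      nlinarith [Real.sq_sqrt (show (0:ℝ) ≤ 3 by norm_num), Real.sqrt_nonneg 3]
    have hπ : Real.pi < 3.15 := by linarith [Real.pi_lt_d2]
    calc Real.pi * r^2 * (1 + ρ/(6*r)) = Real.pi*r^2 + Real.pi*r*ρ/6 := by
          field_simp
    _ < Real.pi*r^2 + Real.sqrt 3 * r * ρ := by nlinarith [mul_pos hr0 hρ0]
    _ ≤ _ := h3
  · -- upper bound
    set t := r + ρ with ht
    have ht0 : 0 < t := by rw [ht]; linarith
    have ht2 : t ≤ 1/2 := by rw [ht]; linarith
    have hsub : S ⊆ {p : Torus | torusDist p x₀ ≤ t} := by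
      rintro p ⟨y, hyY', hpy⟩
      have h1 : torusDist x₀ y ≤ ρ := hub ⟨y, by simpa using hyY', rfl⟩
      have h2 : torusDist p x₀ ≤ torusDist p y + torusDist y x₀ :=
        AreaAux.torusDist_triangle p y x₀
      rw [AreaAux.torusDist_comm y x₀] at h2
      rw [ht]
      exact h2.trans (add_le_add hpy h1)
    have hstep : ∀ ε : ℝ, 0 < ε → (volume S).toReal ≤ Real.pi*t^2 + 4*ε*t := by
      intro ε hε
      have := (measure_mono hsub).trans (AreaAux.vol_ball_le x₀ t ε ht0 ht2 hε)
      exact ENNReal.toReal_le_of_le_ofReal (by positivity) this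
    have hfin : (volume S).toReal ≤ Real.pi*t^2 := by
      apply le_of_forall_pos_le_add
      intro ε hε
      have h1 := hstep (ε/(4*t)) (by positivity)
      have he : 4*(ε/(4*t))*t = ε := by field_simp
      rw [he] at h1
      linarith [h1]
    have hπ : 0 < Real.pi := Real.pi_pos
    calc (volume S).toReal ≤ Real.pi*t^2 := hfin
    _ < Real.pi * r^2 * (1 + 5*ρ/(2*r)) := by
        have expand : Real.pi * r^2 * (1 + 5*ρ/(2*r)) = Real.pi*r^2 + 5*Real.pi*r*ρ/2 := by
          field_simp
        rw [expand, ht]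
        nlinarith [mul_pos (mul_pos hπ hρ0) hρ0, mul_pos (mul_pos hπ hρ0) hr0]
end

section
/- Let 0 < ε ≤ 10^{−18} be fixed. Assume μ = Θ(1). Then the probability that G(X;r) contains a connected component of diameter at most εr and size greater than (log n)/37 is O(1/(n^{1.1} log n)). -/
open MeasureTheory Filter Set

section AuxProof

lemma torus_univ : (volume : Measure Torus) Set.univ = 1 := by
  rw [Measure.volume_eq_prod, ← Set.univ_prod_univ, Measure.prod_prod]
  simp [AddCircle.measure_univ]

lemma ball_bound (z : Torus) (ρ : ℝ) :
    volume {w : Torus | torusDist w z ≤ ρ} ≤ ENNReal.ofReal (2*ρ) ^ 2 := by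
  have hsub : {w : Torus | torusDist w z ≤ ρ} ⊆
      Metric.closedBall z.1 ρ ×ˢ Metric.closedBall z.2 ρ := by
    intro w hw
    simp only [mem_setOf_eq, torusDist] at hw
    have h1 := Real.sq_sqrt (by positivity : (0:ℝ) ≤ dist w.1 z.1 ^ 2 + dist w.2 z.2 ^ 2)
    have h2 := Real.sqrt_nonneg (dist w.1 z.1 ^ 2 + dist w.2 z.2 ^ 2)
    have d1 : (0:ℝ) ≤ dist w.1 z.1 := dist_nonneg
    have d2 : (0:ℝ) ≤ dist w.2 z.2 := dist_nonneg
    constructor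
    · simp only [Metric.mem_closedBall]; nlinarith [sq_nonneg (dist w.2 z.2)]
    · simp only [Metric.mem_closedBall]; nlinarith [sq_nonneg (dist w.1 z.1)]
  calc volume {w : Torus | torusDist w z ≤ ρ}
      ≤ volume (Metric.closedBall z.1 ρ ×ˢ Metric.closedBall z.2 ρ) := measure_mono hsub
    _ = volume (Metric.closedBall z.1 ρ) * volume (Metric.closedBall z.2 ρ) := by
        rw [Measure.volume_eq_prod, Measure.prod_prod]
    _ ≤ ENNReal.ofReal (2*ρ) * ENNReal.ofReal (2*ρ) := by
        rw [AddCircle.volume_closedBall, AddCircle.volume_closedBall]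
        exact mul_le_mul' (ENNReal.ofReal_le_ofReal (min_le_right _ _))
          (ENNReal.ofReal_le_ofReal (min_le_right _ _))
    _ = _ := by rw [sq]

lemma measTD (n : ℕ) (j i₀ : Fin n) :
    Measurable fun X : Fin n → Torus => torusDist (X j) (X i₀) := by
  have h1 : Measurable fun X : Fin n → Torus => (X j).1 := (measurable_pi_apply j).fst
  have h2 : Measurable fun X : Fin n → Torus => (X i₀).1 := (measurable_pi_apply i₀).fst
  have h3 : Measurable fun X : Fin n → Torus => (X j).2 := (measurable_pi_apply j).snd
  have h4 : Measurable fun X : Fin n → Torus => (X i₀).2 := (measurable_pi_apply i₀).snd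
  exact Measurable.comp Real.continuous_sqrt.measurable
    (((h1.dist h2).pow_const 2).add ((h3.dist h4).pow_const 2))

def pSing {n : ℕ} (i₀ : Fin n) : Fin n → Prop := fun i => i = i₀
instance pSingDec {n : ℕ} (i₀ : Fin n) : DecidablePred (pSing i₀) := fun i => instDecidableEqFin n i i₀

lemma vol_cluster (n : ℕ) (ρ : ℝ) (i₀ : Fin n) (T : Finset (Fin n)) (hT : i₀ ∉ T) :
    volume {X : Fin n → Torus | ∀ j ∈ T, torusDist (X j) (X i₀) ≤ ρ}
      ≤ ENNReal.ofReal (2*ρ) ^ (2 * T.card) := by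
  classical
  set A := {X : Fin n → Torus | ∀ j ∈ T, torusDist (X j) (X i₀) ≤ ρ} with hA
  have hAm : MeasurableSet A := by
    have : A = ⋂ j ∈ T, {X : Fin n → Torus | torusDist (X j) (X i₀) ≤ ρ} := by
      ext X; simp [hA]
    rw [this]
    exact MeasurableSet.biInter (Finset.countable_toSet T)
      (fun j _ => measurableSet_le (measTD n j i₀) measurable_const)
  set p : Fin n → Prop := pSing i₀ with hp
  set e := MeasurableEquiv.piEquivPiSubtypeProd (fun _ : Fin n => Torus) p with he
  have hmp := volume_preserving_piEquivPiSubtypeProd (fun _ : Fin n => Torus) p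
  have hvol : volume A = volume (e.symm ⁻¹' A) :=
    ((hmp.symm e).measure_preimage hAm.nullMeasurableSet).symm
  set M : ENNReal := ENNReal.ofReal (2*ρ) ^ 2 with hM
  have hslice : ∀ a : {i // p i} → Torus,
      (volume : Measure ({i // ¬ p i} → Torus)) (Prod.mk a ⁻¹' (e.symm ⁻¹' A)) ≤ M ^ T.card := by
    intro a
    set z : Torus := a ⟨i₀, show p i₀ from rfl⟩ with hz
    set C : {i // ¬ p i} → Set Torus :=
      fun i => if (i : Fin n) ∈ T then {w : Torus | torusDist w z ≤ ρ} else Set.univ with hC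
    have hsub : (Prod.mk a ⁻¹' (e.symm ⁻¹' A)) ⊆ Set.pi Set.univ C := by
      intro Y hY i _
      simp only [Set.mem_preimage, hA, Set.mem_setOf_eq] at hY
      by_cases hiT : (i : Fin n) ∈ T
      · have h := hY (i : Fin n) hiT
        have e1 : e.symm (a, Y) (i : Fin n) = Y i := by
          simp only [he, MeasurableEquiv.piEquivPiSubtypeProd_symm_apply, dif_neg i.2]
        have e2 : e.symm (a, Y) i₀ = z := by
          simp only [he, MeasurableEquiv.piEquivPiSubtypeProd_symm_apply,
            dif_pos (show p i₀ from rfl), hz]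
        rw [e1, e2] at h
        simp only [hC, if_pos hiT]
        exact h
      · simp only [hC, if_neg hiT]; trivial
    calc (volume : Measure ({i // ¬ p i} → Torus)) (Prod.mk a ⁻¹' (e.symm ⁻¹' A))
        ≤ volume (Set.pi Set.univ C) := measure_mono hsub
      _ = ∏ i : {i // ¬ p i}, volume (C i) := volume_pi_pi C
      _ ≤ ∏ i : {i // ¬ p i}, (if (i : Fin n) ∈ T then M else 1) := by
          refine Finset.prod_le_prod' fun i _ => ?_
          by_cases hiT : (i : Fin n) ∈ T
          · simp only [hC, if_pos hiT]; exact ball_bound z ρ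
          · simp only [hC, if_neg hiT, torus_univ, le_refl]
      _ = M ^ (Finset.univ.filter fun i : {i // ¬ p i} => (i : Fin n) ∈ T).card := by
          rw [Finset.prod_ite, Finset.prod_const, Finset.prod_const_one, mul_one]
      _ = M ^ T.card := by
          congr 1
          refine Finset.card_bij (fun i _ => (i : Fin n)) ?_ ?_ ?_
          · intro i hi; exact (Finset.mem_filter.mp hi).2
          · intro i hi j hj hij; exact Subtype.ext hij
          · intro j hj
            have hj' : ¬ p j := fun h => hT ((show j = i₀ from h) ▸ hj)
            exact ⟨⟨j, hj'⟩, Finset.mem_filter.mpr ⟨Finset.mem_univ _, hj⟩, rfl⟩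
  have hBm : MeasurableSet (e.symm ⁻¹' A) := e.symm.measurable hAm
  have huniv1 : (volume : Measure ({i // p i} → Torus)) Set.univ = 1 := by
    rw [← Set.pi_univ Set.univ, volume_pi_pi]
    simp [torus_univ]
  calc volume A = volume (e.symm ⁻¹' A) := hvol
    _ = ∫⁻ a, (volume : Measure ({i // ¬ p i} → Torus)) (Prod.mk a ⁻¹' (e.symm ⁻¹' A)) ∂(volume : Measure ({i // p i} → Torus)) := by
        rw [Measure.volume_eq_prod, Measure.prod_apply hBm]
    _ ≤ ∫⁻ _, M ^ T.card ∂(volume : Measure ({i // p i} → Torus)) := lintegral_mono hslice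
    _ = M ^ T.card := by rw [lintegral_const, huniv1, mul_one]
    _ = ENNReal.ofReal (2*ρ) ^ (2 * T.card) := by rw [hM, ← pow_mul, mul_comm 2 T.card, pow_mul]

lemma vol_union_bound (n k : ℕ) (hk : 1 ≤ k) (ρ : ℝ) (hρ : 0 ≤ ρ)
    (E : Set (Fin n → Torus))
    (hE : ∀ X ∈ E, ∃ S : Finset (Fin n), S.card = k ∧
      ∀ i ∈ S, ∀ j ∈ S, torusDist (X i) (X j) ≤ ρ) :
    Pr n E ≤ (n.choose k : ℝ) * ((2*ρ) ^ (2*(k-1))) := by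
  classical
  set F := fun S : Finset (Fin n) => {X : Fin n → Torus | ∀ i ∈ S, ∀ j ∈ S, torusDist (X i) (X j) ≤ ρ} with hF
  have hsub : E ⊆ ⋃ S ∈ Finset.powersetCard k (Finset.univ : Finset (Fin n)), F S := by
    intro X hX
    obtain ⟨S, hcard, hdist⟩ := hE X hX
    exact Set.mem_biUnion (Finset.mem_powersetCard_univ.mpr hcard) hdist
  have hone : ∀ S ∈ Finset.powersetCard k (Finset.univ : Finset (Fin n)),
      volume (F S) ≤ ENNReal.ofReal (2*ρ) ^ (2*(k-1)) := by
    intro S hS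
    have hcard : S.card = k := (Finset.mem_powersetCard_univ.mp hS)
    have hne : S.Nonempty := Finset.card_pos.mp (hcard ▸ hk)
    obtain ⟨i₀, hi₀⟩ := hne
    have hsub2 : F S ⊆ {X : Fin n → Torus | ∀ j ∈ S.erase i₀, torusDist (X j) (X i₀) ≤ ρ} := by
      intro X hX j hj
      exact hX j (Finset.erase_subset _ _ hj) i₀ hi₀
    calc volume (F S) ≤ _ := measure_mono hsub2
      _ ≤ ENNReal.ofReal (2*ρ) ^ (2 * (S.erase i₀).card) :=
          vol_cluster n ρ i₀ (S.erase i₀) (Finset.notMem_erase _ _)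
      _ = ENNReal.ofReal (2*ρ) ^ (2*(k-1)) := by rw [Finset.card_erase_of_mem hi₀, hcard]
  have hvol : volume E ≤ (n.choose k : ENNReal) * ENNReal.ofReal (2*ρ) ^ (2*(k-1)) := by
    calc volume E ≤ volume (⋃ S ∈ Finset.powersetCard k (Finset.univ : Finset (Fin n)), F S) :=
          measure_mono hsub
      _ ≤ ∑ S ∈ Finset.powersetCard k (Finset.univ : Finset (Fin n)), volume (F S) :=
          measure_biUnion_finset_le _ _
      _ ≤ ∑ _S ∈ Finset.powersetCard k (Finset.univ : Finset (Fin n)),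
            ENNReal.ofReal (2*ρ) ^ (2*(k-1)) := Finset.sum_le_sum hone
      _ = (Finset.powersetCard k (Finset.univ : Finset (Fin n))).card
            * ENNReal.ofReal (2*ρ) ^ (2*(k-1)) := by rw [Finset.sum_const, nsmul_eq_mul]
      _ = (n.choose k : ENNReal) * ENNReal.ofReal (2*ρ) ^ (2*(k-1)) := by
          rw [Finset.card_powersetCard, Finset.card_univ, Fintype.card_fin]
  have hfin : ((n.choose k : ENNReal) * ENNReal.ofReal (2*ρ) ^ (2*(k-1))) ≠ ⊤ := by
    exact ENNReal.mul_ne_top (ENNReal.natCast_ne_top _) (ENNReal.pow_ne_top ENNReal.ofReal_ne_top)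
  have := ENNReal.toReal_mono hfin hvol
  rw [ENNReal.toReal_mul, ENNReal.toReal_pow, ENNReal.toReal_ofReal (by linarith)] at this
  rw [show ((n.choose k : ENNReal)).toReal = (n.choose k : ℝ) by simp] at this
  exact this

lemma pow_le_factorial_mul_exp (k : ℕ) :
    ((k:ℝ))^k ≤ (k.factorial : ℝ) * Real.exp k := by
  have hsum := Real.sum_le_exp_of_nonneg (by positivity : (0:ℝ) ≤ (k:ℝ)) (k+1)
  have hterm : ((k:ℝ))^k / (k.factorial : ℝ) ≤ ∑ i ∈ Finset.range (k+1), (k:ℝ)^i / i.factorial := by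
    exact Finset.single_le_sum (f := fun i => (k:ℝ)^i / i.factorial)
      (fun i _ => by positivity) (Finset.mem_range.mpr (Nat.lt_succ_self k))
  have h := le_trans hterm hsum
  have hf : (0:ℝ) < (k.factorial : ℝ) := by positivity
  calc ((k:ℝ))^k = ((k:ℝ))^k / (k.factorial : ℝ) * (k.factorial : ℝ) := by field_simp
    _ ≤ Real.exp k * (k.factorial : ℝ) := by exact mul_le_mul_of_nonneg_right h hf.le
    _ = _ := mul_comm _ _

lemma choose_le_pow_div (n k : ℕ) :
    (n.choose k : ℝ) ≤ (n:ℝ)^k / (k.factorial : ℝ) := by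
  have h : k.factorial * n.choose k ≤ n ^ k := by
    rw [← Nat.descFactorial_eq_factorial_mul_choose]
    exact Nat.descFactorial_le_pow n k
  have h' : ((k.factorial * n.choose k : ℕ) : ℝ) ≤ ((n ^ k : ℕ) : ℝ) := Nat.cast_le.mpr h
  push_cast at h'
  rw [le_div_iff₀ (by positivity : (0:ℝ) < (k.factorial : ℝ))]
  linarith [h']

set_option maxRecDepth 10000 in
lemma small_le_exp_neg78 (ε : ℝ) (hε0 : 0 < ε) (hε : ε ≤ 1 / 10 ^ 18) :
    131 * ε^2 ≤ Real.exp (-78) := by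
  have h1 : Real.exp 78 = Real.exp 1 ^ 78 := by
    rw [← Real.exp_nat_mul]; norm_num
  have h2 : Real.exp 1 ^ 78 ≤ 2.7182818286 ^ 78 :=
    pow_le_pow_left₀ (Real.exp_pos 1).le Real.exp_one_lt_d9.le 78
  have h4 : ε^2 ≤ (1/10^18)^2 := by
    have := sq_le_sq' (by linarith : -(1/10^18) ≤ ε) hε
    simpa using this
  have h5 : Real.exp 78 * (131 * ε^2) ≤ 1 := by
    calc Real.exp 78 * (131 * ε^2) ≤ 2.7182818286 ^ 78 * (131 * (1/10^18)^2) := by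
          apply mul_le_mul (h1 ▸ h2) (by nlinarith) (by positivity) (by positivity)
      _ ≤ 1 := by norm_num
  rw [Real.exp_neg, ← one_div, le_div_iff₀ (Real.exp_pos 78)]
  nlinarith [h5]

set_option maxHeartbeats 2000000 in
lemma analysis_bound (ε c₁ : ℝ) (hε0 : 0 < ε) (hε : ε ≤ 1/10^18) (hc₁ : 0 < c₁)
    (n : ℕ) (r : ℝ) (hr : 0 < r) (m : ℕ) (hm : m = ⌊Real.log n / 37⌋₊)
    (hmu : c₁ ≤ (n:ℝ) * Real.exp (-Real.pi * r^2 * n))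
    (hL1 : 111 ≤ Real.log n)
    (hL2 : 100 * (1 + |Real.log c₁|) ≤ Real.log n)
    (hL3 : Real.log n ≤ (n:ℝ) ^ ((3:ℝ)/370)) :
    (n.choose (m+1) : ℝ) * (2*(ε*r)) ^ (2*m) ≤
      (131*ε^2)⁻¹ / ((n:ℝ) ^ (1.1:ℝ) * Real.log n) := by
  set N : ℝ := (n:ℝ) with hN
  set L : ℝ := Real.log n with hL
  set E : ℝ := Real.exp 1 with hE
  set K : ℝ := ((m+1 : ℕ) : ℝ) with hK
  set P : ℝ := (2*(ε*r))^2 with hP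
  set q : ℝ := 131 * ε^2 with hq
  have hL0 : (0:ℝ) < L := by linarith
  have hN1 : (1:ℝ) < N := by
    by_contra h
    push_neg at h
    have : L ≤ 0 := Real.log_nonpos (by positivity) h
    linarith
  have hN0 : (0:ℝ) < N := by linarith
  have hKm : L / 37 < K := by
    have := Nat.lt_floor_add_one (L / 37)
    rw [hK, hm]; push_cast; linarith
  have hK0 : (0:ℝ) < K := by positivity
  have hK3 : (3:ℝ) ≤ K := by
    have h37 : (3:ℝ) ≤ L / 37 := by linarith
    have : (⌊L / 37⌋₊ : ℝ) + 1 = K := by rw [hK, hm]; push_cast; ring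
    nlinarith [Nat.sub_one_lt_floor (L/37), this]
  have hLK : L ≤ 37 * K := by nlinarith
  have hE0 : (0:ℝ) < E := Real.exp_pos 1
  have hEd : E ≤ 2.7182818286 := Real.exp_one_lt_d9.le
  have ha : |Real.log c₁| ≤ L / 100 := by linarith [abs_nonneg (Real.log c₁)]
  -- from hmu : π r² n ≤ L + a
  have hπ : Real.pi * (r^2 * N) ≤ L + |Real.log c₁| := by
    have hlog : Real.log c₁ ≤ Real.log (N * Real.exp (-Real.pi * r^2 * N)) :=
      Real.log_le_log hc₁ hmu
    rw [Real.log_mul (ne_of_gt hN0) (ne_of_gt (Real.exp_pos _)), Real.log_exp] at hlog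
    have : -|Real.log c₁| ≤ Real.log c₁ := neg_abs_le _
    nlinarith
  have hπ314 : (3.14:ℝ) ≤ Real.pi := by linarith [Real.pi_gt_d6]
  have hr2N : (0:ℝ) ≤ r^2 * N := by positivity
  have hrN : 3.14 * (r^2 * N) ≤ L + |Real.log c₁| := by nlinarith
  have hP0 : (0:ℝ) ≤ P := by positivity
  have hNP : N * P ≤ 1.3 * ε^2 * L := by
    have hP4 : P = 4 * ε^2 * r^2 := by rw [hP]; ring
    have habs : L + |Real.log c₁| ≤ 1.01 * L := by linarith
    have h5 : 3.14 * (r^2 * N) ≤ 1.01 * L := by linarith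
    have h6 : r^2 * N ≤ (1.01/3.14) * L := by linarith
    have h7 : 4 * ε^2 * (r^2 * N) ≤ 4 * ε^2 * ((1.01/3.14) * L) :=
      mul_le_mul_of_nonneg_left h6 (by positivity)
    calc N * P = 4 * ε^2 * (r^2 * N) := by rw [hP4]; ring
      _ ≤ 4 * ε^2 * ((1.01/3.14) * L) := h7
      _ ≤ 1.3 * ε^2 * L := by nlinarith [sq_nonneg ε, hL0]
  have hq0 : (0:ℝ) < q := by positivity
  have hsmall : q ≤ Real.exp (-78) := small_le_exp_neg78 ε hε0 hε
  have hq1 : q ≤ 1 := le_trans hsmall (by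
    have := Real.exp_le_one_iff.mpr (by norm_num : (-78:ℝ) ≤ 0); linarith)
  have hqK : N * E * P / K ≤ q := by
    rw [div_le_iff₀ hK0]
    have s1 : E * (N * P) ≤ E * (1.3 * ε^2 * L) := mul_le_mul_of_nonneg_left hNP hE0.le
    have s2 : (1.3 * ε^2) * L ≤ (1.3 * ε^2) * (37 * K) :=
      mul_le_mul_of_nonneg_left hLK (by positivity)
    have s3 : E * ((1.3 * ε^2) * (37 * K)) = (48.1 * E) * (ε^2 * K) := by ring
    have s4 : (48.1 * E) * (ε^2 * K) ≤ 131 * (ε^2 * K) :=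
      mul_le_mul_of_nonneg_right (by linarith) (by positivity)
    have s5 : E * ((1.3 * ε^2) * L) ≤ E * ((1.3 * ε^2) * (37 * K)) :=
      mul_le_mul_of_nonneg_left s2 hE0.le
    calc N * E * P = E * (N * P) := by ring
      _ ≤ E * (1.3 * ε^2 * L) := s1
      _ = E * ((1.3 * ε^2) * L) := by ring
      _ ≤ E * ((1.3 * ε^2) * (37 * K)) := s5
      _ = (48.1 * E) * (ε^2 * K) := s3
      _ ≤ 131 * (ε^2 * K) := s4
      _ = q * K := by rw [hq]; ring
  have hEK : E ≤ K := by linarith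
  have b1 : (n.choose (m+1) : ℝ) ≤ N^(m+1) / ((m+1).factorial : ℝ) := choose_le_pow_div n (m+1)
  have hF0 : (0:ℝ) < ((m+1).factorial : ℝ) := by positivity
  have b2 : K^(m+1) ≤ ((m+1).factorial : ℝ) * E^(m+1) := by
    have h := pow_le_factorial_mul_exp (m+1)
    have hek : Real.exp ((m+1 : ℕ):ℝ) = E^(m+1) := by
      rw [hE, ← Real.exp_nat_mul]; norm_num
    rw [hek] at h
    exact h
  have hLHS : (n.choose (m+1) : ℝ) * (2*(ε*r)) ^ (2*m) = (n.choose (m+1) : ℝ) * P^m := by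
    rw [hP, pow_mul]
  rw [hLHS]
  have step1 : (n.choose (m+1) : ℝ) * P^m ≤ N^(m+1) * P^m / ((m+1).factorial : ℝ) := by
    have h := mul_le_mul_of_nonneg_right b1 (pow_nonneg hP0 m)
    calc (n.choose (m+1) : ℝ) * P^m ≤ N^(m+1) / ((m+1).factorial : ℝ) * P^m := h
      _ = N^(m+1) * P^m / ((m+1).factorial : ℝ) := by ring
  have step2 : N^(m+1) * P^m / ((m+1).factorial : ℝ) ≤ N^(m+1) * P^m * E^(m+1) / K^(m+1) := by
    rw [div_le_div_iff₀ hF0 (by positivity)]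
    have hnum : (0:ℝ) ≤ N^(m+1) * P^m := by positivity
    calc N^(m+1) * P^m * K^(m+1) ≤ N^(m+1) * P^m * (((m+1).factorial : ℝ) * E^(m+1)) :=
          mul_le_mul_of_nonneg_left b2 hnum
      _ = N^(m+1) * P^m * E^(m+1) * ((m+1).factorial : ℝ) := by ring
  have step3 : N^(m+1) * P^m * E^(m+1) / K^(m+1) = (N*E/K) * (N*E*P/K)^m := by
    rw [div_pow, div_mul_div_comm, ← pow_succ']
    ring
  have step4 : (N*E/K) * (N*E*P/K)^m ≤ N * q^m := by
    have h1 : N*E/K ≤ N := by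
      rw [div_le_iff₀ hK0]
      nlinarith
    have h2 : (N*E*P/K)^m ≤ q^m := pow_le_pow_left₀ (by positivity) hqK m
    exact mul_le_mul h1 h2 (by positivity) hN0.le
  have step5 : q^m ≤ q ^ ((L/37 - 1 : ℝ)) := by
    rw [← Real.rpow_natCast q m]
    apply Real.rpow_le_rpow_of_exponent_ge hq0 hq1
    have h : L / 37 < (m:ℝ) + 1 := by
      have := Nat.lt_floor_add_one (L / 37); rw [hm]; push_cast; linarith
    linarith
  have step6 : q ^ ((L/37 - 1 : ℝ)) = q ^ ((L/37 : ℝ)) / q := by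
    rw [Real.rpow_sub hq0, Real.rpow_one]
  have step7 : q ^ ((L/37 : ℝ)) ≤ N ^ (-(78/37) : ℝ) := by
    have hlogq : Real.log q ≤ -78 := by
      calc Real.log q ≤ Real.log (Real.exp (-78)) := Real.log_le_log hq0 hsmall
        _ = -78 := Real.log_exp _
    rw [Real.rpow_def_of_pos hq0, Real.rpow_def_of_pos hN0]
    apply Real.exp_le_exp.mpr
    have hL37 : (0:ℝ) ≤ L / 37 := by linarith
    calc Real.log q * (L/37) ≤ (-78) * (L/37) := mul_le_mul_of_nonneg_right hlogq hL37
      _ = Real.log N * (-(78/37)) := by rw [← hL]; ring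
  have step8 : N * (N ^ (-(78/37) : ℝ) / q) = q⁻¹ * N ^ (-(41/37) : ℝ) := by
    have h : N * N ^ (-(78/37) : ℝ) = N ^ (-(41/37) : ℝ) := by
      nth_rewrite 1 [← Real.rpow_one N]
      rw [← Real.rpow_add hN0]
      norm_num
    rw [div_eq_mul_inv, ← mul_assoc, h, mul_comm]
  have final : q⁻¹ * N ^ (-(41/37) : ℝ) ≤ q⁻¹ / (N ^ (1.1:ℝ) * L) := by
    have hcomb : N ^ (1.1:ℝ) * L ≤ N ^ ((41/37 : ℝ)) := by
      calc N ^ (1.1:ℝ) * L ≤ N ^ (1.1:ℝ) * N ^ ((3:ℝ)/370) :=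
            mul_le_mul_of_nonneg_left hL3 (by positivity)
        _ = N ^ ((41/37 : ℝ)) := by
            rw [← Real.rpow_add hN0]; norm_num
    have h9 : N ^ (-(41/37) : ℝ) ≤ (N ^ (1.1:ℝ) * L)⁻¹ := by
      rw [Real.rpow_neg hN0.le]
      exact inv_anti₀ (by positivity) hcomb
    calc q⁻¹ * N ^ (-(41/37):ℝ) ≤ q⁻¹ * (N ^ (1.1:ℝ) * L)⁻¹ :=
          mul_le_mul_of_nonneg_left h9 (by positivity)
      _ = q⁻¹ / (N ^ (1.1:ℝ) * L) := (div_eq_mul_inv _ _).symm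
  calc (n.choose (m+1) : ℝ) * P^m
      ≤ N^(m+1) * P^m / ((m+1).factorial : ℝ) := step1
    _ ≤ N^(m+1) * P^m * E^(m+1) / K^(m+1) := step2
    _ = (N*E/K) * (N*E*P/K)^m := step3
    _ ≤ N * q^m := step4
    _ ≤ N * q ^ ((L/37 - 1 : ℝ)) := mul_le_mul_of_nonneg_left step5 hN0.le
    _ = N * (q ^ ((L/37 : ℝ)) / q) := by rw [step6]
    _ ≤ N * (N ^ (-(78/37) : ℝ) / q) := by
        apply mul_le_mul_of_nonneg_left _ hN0.le
        exact div_le_div_of_nonneg_right step7 hq0.le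
    _ = q⁻¹ * N ^ (-(41/37) : ℝ) := step8
    _ ≤ q⁻¹ / (N ^ (1.1:ℝ) * L) := final

end AuxProof

/-- **components of type 2.** For fixed `0 < ε ≤ 10⁻¹⁸`, if `μ = Θ(1)` then
the probability that `G(X;r)` has a component of diameter at most `εr` and size greater
than `(log n)/37` is `O(1/(n^{1.1} log n))`. -/
theorem prob_type2_components
    (ε : ℝ) (hε0 : 0 < ε) (hε : ε ≤ 1 / 10 ^ 18)
    (r : ℕ → ℝ) (hr : ∀ n, 0 < r n)
    (hμ : ∃ c₁ c₂ : ℝ, 0 < c₁ ∧ c₁ ≤ c₂ ∧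
      ∀ᶠ n : ℕ in atTop, c₁ ≤ mu r n ∧ mu r n ≤ c₂) :
    ∃ C : ℝ, ∀ᶠ n : ℕ in atTop,
      Pr n {X | ∃ c : (geomGraph n (r n) X).ConnectedComponent,
        (∀ u ∈ c.supp, ∀ v ∈ c.supp, torusDist (X u) (X v) ≤ ε * r n) ∧
        Real.log n / 37 < (c.supp.ncard : ℝ)} ≤
      C / ((n : ℝ) ^ (1.1 : ℝ) * Real.log n) := by
  obtain ⟨c₁, c₂, hc₁, hc₁₂, hev⟩ := hμ
  refine ⟨(131*ε^2)⁻¹, ?_⟩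
  have h111 : ∀ᶠ n : ℕ in atTop, 111 ≤ Real.log n :=
    (Real.tendsto_log_atTop.comp tendsto_natCast_atTop_atTop).eventually_ge_atTop 111
  have h100 : ∀ᶠ n : ℕ in atTop, 100 * (1 + |Real.log c₁|) ≤ Real.log n :=
    (Real.tendsto_log_atTop.comp tendsto_natCast_atTop_atTop).eventually_ge_atTop _
  have hrpow : ∀ᶠ n : ℕ in atTop, Real.log n ≤ (n:ℝ) ^ ((3:ℝ)/370) := by
    have h := (isLittleO_log_rpow_atTop (by norm_num : (0:ℝ) < 3/370)).bound one_pos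
    have h2 := tendsto_natCast_atTop_atTop (R := ℝ) |>.eventually h
    filter_upwards [h2] with n hn
    have : Real.log n ≤ ‖Real.log (n:ℝ)‖ := le_abs_self _
    have h3 : ‖((n:ℝ)) ^ ((3:ℝ)/370)‖ = (n:ℝ) ^ ((3:ℝ)/370) :=
      Real.norm_of_nonneg (Real.rpow_nonneg (Nat.cast_nonneg n) _)
    calc Real.log n ≤ ‖Real.log (n:ℝ)‖ := this
      _ ≤ 1 * ‖((n:ℝ)) ^ ((3:ℝ)/370)‖ := hn
      _ = (n:ℝ) ^ ((3:ℝ)/370) := by rw [one_mul, h3]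
  filter_upwards [hev, h111, h100, hrpow] with n hmun hL1 hL2 hL3
  set m : ℕ := ⌊Real.log n / 37⌋₊ with hm
  set E := {X : Fin n → Torus | ∃ c : (geomGraph n (r n) X).ConnectedComponent,
        (∀ u ∈ c.supp, ∀ v ∈ c.supp, torusDist (X u) (X v) ≤ ε * r n) ∧
        Real.log n / 37 < (c.supp.ncard : ℝ)} with hEdef
  have hE : ∀ X ∈ E, ∃ S : Finset (Fin n), S.card = m+1 ∧
      ∀ i ∈ S, ∀ j ∈ S, torusDist (X i) (X j) ≤ ε * r n := by
    intro X hX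
    obtain ⟨c, hdiam, hsize⟩ := hX
    have hfloor : m < c.supp.ncard := by
      rw [hm]
      exact (Nat.floor_lt (by positivity)).mpr hsize
    obtain ⟨t, hts, htcard⟩ := Set.exists_subset_card_eq (Nat.succ_le_of_lt hfloor)
    have htfin : t.Finite := Set.toFinite t
    refine ⟨htfin.toFinset, ?_, ?_⟩
    · rw [← Set.ncard_eq_toFinset_card t htfin, htcard]
    · intro i hi j hj
      rw [Set.Finite.mem_toFinset] at hi hj
      exact hdiam i (hts hi) j (hts hj)
  have step1 := vol_union_bound n (m+1) (Nat.le_add_left 1 m) (ε * r n)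
    (mul_nonneg hε0.le (hr n).le) E hE
  rw [Nat.add_sub_cancel] at step1
  refine le_trans step1 ?_
  exact analysis_bound ε c₁ hε0 hε hc₁ n (r n) (hr n) m hm
    (by have := hmun.1; rwa [mu] at this) hL1 hL2 hL3
end
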